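/- Let n ≥ 2 be an integer and consider the n-set partition generated by D₁ = {(2^(n-1) − 1)·a(k) + k : k ≥ 1}, with D₂ = D₁ ± 2^(n-2) = {(2^(n-1) − 1)·a(k) + k − 2^(n-2) : k ≥ 1} ∪ {(2^(n-1) − 1)·a(k) + k + 2^(n-2) : k ≥ 1}. If the elements of D₂ are listed in increasing order d_{2,1} < d_{2,2} < d_{2,3} < ..., then for every positive integer k, d_{2,k} = a(k) + (2^(n-1) − 2)·k − (2^(n-2) − 1). -/

import Mathlib

noncomputable def φ : ℝ := (1 + Real.sqrt 5) / 2
noncomputable def a (n : ℕ) : ℤ := ⌊(n : ℝ) * φ⌋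

/-- The second column of the `n`-set partition generated by
`D₁ = {(2^(n-1) - 1)·a(k) + k : k ≥ 1}`. -/
noncomputable def D2 (n : ℕ) : Set ℤ :=
  {x | ∃ k : ℕ, 1 ≤ k ∧ x = ((2:ℤ) ^ (n-1) - 1) * a k + k - 2 ^ (n-2)} ∪
  {x | ∃ k : ℕ, 1 ≤ k ∧ x = ((2:ℤ) ^ (n-1) - 1) * a k + k + 2 ^ (n-2)}

lemma phi_sq : φ^2 = φ + 1 := by
  have h5 : Real.sqrt 5 ^ 2 = 5 := Real.sq_sqrt (by norm_num)
  unfold φ; nlinarith [h5]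

lemma phi_gt : (1.6:ℝ) < φ := by
  have : (2.2:ℝ) < Real.sqrt 5 := by
    nlinarith [Real.sqrt_nonneg 5, Real.sq_sqrt (show (0:ℝ) ≤ 5 by norm_num)]
  unfold φ; linarith

lemma phi_lt : φ < 1.7 := by
  have : Real.sqrt 5 < 2.4 := by
    nlinarith [Real.sqrt_nonneg 5, Real.sq_sqrt (show (0:ℝ) ≤ 5 by norm_num)]
  unfold φ; linarith

lemma phi_irr : Irrational φ := by
  have h5 : Irrational (Real.sqrt 5) := by
    rw [show (5:ℝ) = ((5:ℕ):ℝ) by norm_num, irrational_sqrt_natCast_iff]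
    rintro ⟨r, hr⟩
    have : r ≤ 5 := by nlinarith
    interval_cases r <;> omega
  have := (h5.ratCast_add 1).div_ratCast (q := 2) (by norm_num)
  simpa [φ] using this

lemma a_nonneg (k : ℕ) : 0 ≤ a k :=
  Int.floor_nonneg.mpr (mul_nonneg (Nat.cast_nonneg _) (by linarith [phi_gt]))

lemma a_le_real (k : ℕ) : (a k : ℝ) ≤ (k:ℝ) * φ := Int.floor_le _

/-- `a` with natural-number values. -/
noncomputable def A (k : ℕ) : ℕ := (a k).toNat

lemma A_cast (k : ℕ) : (A k : ℤ) = a k := Int.toNat_of_nonneg (a_nonneg k)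

lemma A_cast_real (k : ℕ) : (A k : ℝ) = (a k : ℝ) := by
  exact_mod_cast congrArg (Int.cast : ℤ → ℝ) (A_cast k)

lemma a_ge (k : ℕ) : (k:ℤ) ≤ a k := by
  apply Int.le_floor.mpr
  push_cast
  nlinarith [phi_gt, Nat.cast_nonneg (α := ℝ) k]

lemma a_pos {k : ℕ} (hk : 1 ≤ k) : 1 ≤ a k := le_trans (by exact_mod_cast hk) (a_ge k)

lemma A_pos {k : ℕ} (hk : 1 ≤ k) : 1 ≤ A k := by
  have := a_pos hk; unfold A; omega

lemma frac_pos {k : ℕ} (hk : 1 ≤ k) : (a k : ℝ) < (k:ℝ) * φ := by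
  refine (Int.floor_le _).lt_of_ne fun h => ?_
  have : Irrational ((k:ℝ) * φ) := by
    have := (phi_irr.natCast_mul (m := k) (by omega))
    simpa [mul_comm] using this
  exact this.ne_int _ h.symm

lemma frac_lt (k : ℕ) : (k:ℝ) * φ < (a k : ℝ) + 1 := Int.lt_floor_add_one _

lemma a_strictmono : StrictMono a := by
  apply strictMono_nat_of_lt_succ
  intro k
  have : (a k : ℝ) + 1 ≤ ((k+1:ℕ):ℝ) * φ := by
    push_cast
    nlinarith [frac_lt k, phi_gt, a_le_real k]
  calc a k < a k + 1 := by omega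
    _ ≤ a (k+1) := Int.le_floor.mpr (by exact_mod_cast this)

lemma I1 {k : ℕ} (hk : 1 ≤ k) : a (A k) = a k + k - 1 := by
  show ⌊(A k : ℝ) * φ⌋ = a k + k - 1
  rw [A_cast_real, Int.floor_eq_iff]
  have h1 := frac_pos hk
  have h2 := frac_lt k
  have hs := phi_sq
  have hg := phi_gt
  have hl := phi_lt
  push_cast
  constructor
  · nlinarith [mul_pos (show (0:ℝ) < (a k : ℝ) - (k:ℝ)*φ + 1 by linarith)
      (show (0:ℝ) < φ - 1 by linarith)]
  · nlinarith [mul_pos (show (0:ℝ) < (k:ℝ)*φ - (a k : ℝ) by linarith)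
      (show (0:ℝ) < φ - 1 by linarith)]

lemma I2 {k : ℕ} (hk : 1 ≤ k) : a (A k + k) = 2 * a k + k := by
  show ⌊((A k + k : ℕ) : ℝ) * φ⌋ = 2 * a k + k
  rw [Int.floor_eq_iff]
  have h1 := frac_pos hk
  have h2 := frac_lt k
  have hs := phi_sq
  have hg := phi_gt
  have hl := phi_lt
  push_cast [A_cast_real]
  constructor
  · nlinarith [mul_pos (show (0:ℝ) < (k:ℝ)*φ - (a k : ℝ) by linarith)
      (show (0:ℝ) < 2 - φ by linarith)]
  · nlinarith [mul_pos (show (0:ℝ) < (a k : ℝ) - (k:ℝ)*φ + 1 by linarith)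
      (show (0:ℝ) < 2 - φ by linarith)]

lemma I3 {k : ℕ} (hk : 1 ≤ k) : a (A k + k + 1) = 2 * a k + k + 1 := by
  show ⌊((A k + k + 1 : ℕ) : ℝ) * φ⌋ = 2 * a k + k + 1
  rw [Int.floor_eq_iff]
  have h1 := frac_pos hk
  have h2 := frac_lt k
  have hs := phi_sq
  have hg := phi_gt
  have hl := phi_lt
  push_cast [A_cast_real]
  constructor
  · nlinarith [mul_pos (show (0:ℝ) < (k:ℝ)*φ - (a k : ℝ) by linarith)
      (show (0:ℝ) < 2 - φ by linarith)]
  · nlinarith [mul_pos (show (0:ℝ) < (a k : ℝ) - (k:ℝ)*φ + 1 by linarith)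
      (show (0:ℝ) < 2 - φ by linarith)]

/-- Beatty coverage: every positive integer is `a k` or `a k + k` for some `k ≥ 1`. -/
lemma beatty_cover (j : ℤ) (hj : 0 < j) :
    (∃ k : ℕ, 1 ≤ k ∧ j = a k) ∨ (∃ k : ℕ, 1 ≤ k ∧ j = a k + k) := by
  have hrs : Real.HolderConjugate φ (φ^2) := by
    rw [Real.holderConjugate_iff]
    constructor
    · linarith [phi_gt]
    · have hs := phi_sq
      have hg := phi_gt
      field_simp
      nlinarith
  have hsd := phi_irr.beattySeq_symmDiff_beattySeq_pos hrs
  have hjmem := (Set.ext_iff.mp hsd j).mpr hj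
  rw [Set.mem_symmDiff] at hjmem
  have key : (∃ k : ℤ, k > 0 ∧ beattySeq φ k = j) ∨ (∃ k : ℤ, k > 0 ∧ beattySeq (φ^2) k = j) := by
    rcases hjmem with ⟨⟨k, hk, hkj⟩, -⟩ | ⟨⟨k, hk, hkj⟩, -⟩
    · exact Or.inl ⟨k, hk, hkj⟩
    · exact Or.inr ⟨k, hk, hkj⟩
  rcases key with ⟨k, hk, hkj⟩ | ⟨k, hk, hkj⟩
  · left
    refine ⟨k.toNat, by omega, ?_⟩
    rw [← hkj]
    show beattySeq φ k = ⌊(k.toNat : ℝ) * φ⌋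
    unfold beattySeq
    congr 2
    exact_mod_cast (Int.toNat_of_nonneg hk.le).symm
  · right
    refine ⟨k.toNat, by omega, ?_⟩
    rw [← hkj]
    have : beattySeq (φ^2) k = ⌊(k:ℝ) * φ⌋ + k := by
      unfold beattySeq
      rw [show (k:ℝ) * φ^2 = (k:ℝ)*φ + (k:ℤ) by rw [phi_sq]; push_cast; ring]
      exact Int.floor_add_intCast _ _
    rw [this]
    have hc : ((k.toNat : ℕ) : ℝ) = (k : ℝ) := by exact_mod_cast Int.toNat_of_nonneg hk.le
    show ⌊(k:ℝ) * φ⌋ + k = a k.toNat + (k.toNat : ℤ)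
    unfold a
    rw [hc, Int.toNat_of_nonneg hk.le]

/-- The candidate sequence. -/
noncomputable def gseq (H : ℤ) (k : ℕ) : ℤ := a k + (2*H-2)*k - (H-1)

lemma gseq_mono (H : ℤ) (hH : 1 ≤ H) {k : ℕ} (_ : 1 ≤ k) : gseq H k < gseq H (k+1) := by
  unfold gseq
  have := a_strictmono (show k < k + 1 by omega)
  push_cast
  nlinarith

lemma range_eq (H : ℤ) (hH : 1 ≤ H) :
    {x : ℤ | ∃ k : ℕ, 1 ≤ k ∧ x = gseq H k} =
    {x : ℤ | ∃ k : ℕ, 1 ≤ k ∧ x = (2*H-1) * a k + k - H} ∪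
    {x : ℤ | ∃ k : ℕ, 1 ≤ k ∧ x = (2*H-1) * a k + k + H} := by
  have gA : ∀ j : ℕ, 1 ≤ j → gseq H (A j) = (2*H-1) * a j + j - H := by
    intro j hj
    unfold gseq
    rw [I1 hj, A_cast]
    ring
  have gB : ∀ j : ℕ, 1 ≤ j → gseq H (A j + j) = (2*H-1) * a (A j) + (A j) + H := by
    intro j hj
    unfold gseq
    rw [I2 hj, I1 hj, A_cast]
    push_cast [A_cast]
    ring
  ext x
  simp only [Set.mem_setOf_eq, Set.mem_union]
  constructor
  · rintro ⟨k, hk, rfl⟩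
    rcases beatty_cover (k:ℤ) (by exact_mod_cast hk) with ⟨j, hj, hkj⟩ | ⟨j, hj, hkj⟩
    · have hkA : k = A j := by have := A_cast j; omega
      left
      exact ⟨j, hj, by rw [hkA, gA j hj]⟩
    · have hkA : k = A j + j := by have := A_cast j; omega
      right
      refine ⟨A j, A_pos hj, ?_⟩
      rw [hkA, gB j hj]
  · rintro (⟨j, hj, rfl⟩ | ⟨j, hj, rfl⟩)
    · exact ⟨A j, A_pos hj, (gA j hj).symm⟩
    · rcases beatty_cover (j:ℤ) (by exact_mod_cast hj) with ⟨i, hi, hji⟩ | ⟨i, hi, hji⟩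
      · -- j = A i : element is gseq H (A i + i)
        have hjA : j = A i := by have := A_cast i; omega
        refine ⟨A i + i, by have := A_pos hi; omega, ?_⟩
        rw [gB i hi, hjA]
      · -- j = A i + i : element equals type−(A i + i + 1) = gseq H (A (A i + i + 1))
        have hjB : j = A i + i := by have := A_cast i; omega
        have hj1 : 1 ≤ A i + i + 1 := by omega
        subst hjB
        refine ⟨A (A i + i + 1), A_pos hj1, ?_⟩
        rw [gA _ hj1, I3 hi, I2 hi]
        push_cast [A_cast]
        ring

/-- Uniqueness of increasing enumerations. -/
lemma enum_unique (f g : ℕ → ℤ) (hf : ∀ k, 1 ≤ k → f k < f (k+1))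
    (hg : ∀ k, 1 ≤ k → g k < g (k+1))
    (hr : {x : ℤ | ∃ k : ℕ, 1 ≤ k ∧ x = f k} = {x : ℤ | ∃ k : ℕ, 1 ≤ k ∧ x = g k}) :
    ∀ k, 1 ≤ k → f k = g k := by
  have mono : ∀ (h : ℕ → ℤ), (∀ k, 1 ≤ k → h k < h (k+1)) →
      ∀ j k, 1 ≤ j → j < k → h j < h k := by
    intro h hh j k hj hjk
    induction k with
    | zero => omega
    | succ k ih =>
      rcases Nat.lt_or_ge j k with h' | h'
      · exact lt_trans (ih (by omega)) (hh k (by omega))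
      · have : j = k := by omega
        subst this
        exact hh j hj
  intro k
  induction k using Nat.strong_induction_on with
  | _ k ih =>
    intro hk
    have h1 : g k ∈ {x : ℤ | ∃ k : ℕ, 1 ≤ k ∧ x = f k} := by
      rw [hr]; exact ⟨k, hk, rfl⟩
    have h2 : f k ∈ {x : ℤ | ∃ k : ℕ, 1 ≤ k ∧ x = g k} := by
      rw [← hr]; exact ⟨k, hk, rfl⟩
    obtain ⟨m, hm, hgm⟩ := h1
    obtain ⟨m', hm', hfm⟩ := h2
    have hle1 : f k ≤ g k := by
      rcases Nat.lt_or_ge m k with h' | h'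
      · exfalso
        have he := ih m h' hm
        rw [he] at hgm
        exact absurd hgm.symm (ne_of_lt (mono g hg m k hm h'))
      · rcases Nat.eq_or_lt_of_le h' with h'' | h''
        · rw [hgm, ← h'']
        · rw [hgm]; exact (mono f hf k m hk h'').le
    have hle2 : g k ≤ f k := by
      rcases Nat.lt_or_ge m' k with h' | h'
      · exfalso
        have := ih m' h' hm'
        rw [← this] at hfm
        exact absurd hfm.symm (ne_of_lt (mono f hf m' k hm' h'))
      · rcases Nat.eq_or_lt_of_le h' with h'' | h''
        · rw [hfm, ← h'']
        · rw [hfm]; exact (mono g hg k m' hk h'').le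
    omega

theorem second_column_formula (n : ℕ) (hn : 2 ≤ n) (f : ℕ → ℤ)
    (hmono : ∀ k, 1 ≤ k → f k < f (k+1))
    (hrange : {x | ∃ k : ℕ, 1 ≤ k ∧ x = f k} = D2 n) :
    ∀ k, 1 ≤ k → f k = a k + ((2:ℤ) ^ (n-1) - 2) * k - ((2:ℤ) ^ (n-2) - 1) := by
  obtain ⟨m, rfl⟩ : ∃ m, n = m + 2 := ⟨n - 2, by omega⟩
  set H : ℤ := 2^m with hHdef
  have hH : (1:ℤ) ≤ H := one_le_pow₀ (by norm_num)
  have e1 : (2:ℤ)^(m+2-1) = 2*H := by rw [show m+2-1 = m+1 from rfl, pow_succ]; ring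
  have e2 : (2:ℤ)^(m+2-2) = H := by rw [show m+2-2 = m from rfl]
  have hD : D2 (m+2) =
      {x : ℤ | ∃ k : ℕ, 1 ≤ k ∧ x = (2*H-1) * a k + k - H} ∪
      {x : ℤ | ∃ k : ℕ, 1 ≤ k ∧ x = (2*H-1) * a k + k + H} := by
    unfold D2
    rw [e1, e2]
  have key := enum_unique f (gseq H) hmono (fun k hk => gseq_mono H hH hk)
    (by rw [hrange, hD, ← range_eq H hH])
  intro k hk
  rw [key k hk, e1, e2]
  unfold gseq
  ring
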